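/- Suppose g: S¹ → S¹ satisfies |g'| ≥ 15 and |g''| ≤ α, and f satisfies |∂_θ f| ≤ 8α, |∂_{θθ} f| ≤ 50α, |∂_{θx} f| ≤ α, |∂_x f| ≤ 4 + α, and |∂_{xx} f| ≤ 2α⁻¹, with 0 < α ≤ 1/10. If X: S¹ → ℝ is C² with |X'| ≤ α and |X''| ≤ α, and Y is defined (locally) by Y(g(θ)) = f(θ, X(θ)), then |Y'| ≤ α and |Y''| ≤ α. -/

import Mathlib

set_option maxHeartbeats 1000000 in


/-- Pointwise version of Viana's admissible-curve invariance (Lemma 2.1):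
`gd, gdd` denote `g'(θ), g''(θ)`; `fθ, fθθ, fθx, fx, fxx` the partial derivatives
of `f` at `(θ, X(θ))`; `X'`, `X''` the derivatives of the admissible curve; and
`Y', Y''` the derivatives of the image curve given by the usual chain-rule formulas. -/
theorem admissible_curve_invariance
    (α gd gdd fθ fθθ fθx fx fxx X' X'' Y' Y'' : ℝ)
    (hα0 : 0 < α) (hα1 : α ≤ 1 / 10)
    (hgd : 15 ≤ |gd|) (hgdd : |gdd| ≤ α)
    (hfθ : |fθ| ≤ 8 * α) (hfθθ : |fθθ| ≤ 50 * α) (hfθx : |fθx| ≤ α)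
    (hfx : |fx| ≤ 4 + α) (hfxx : |fxx| ≤ 2 * α⁻¹)
    (hX' : |X'| ≤ α) (hX'' : |X''| ≤ α)
    (hY' : Y' = (fθ + fx * X') / gd)
    (hY'' : Y'' = (1 / gd) ^ 2 *
      (fθθ + 2 * fθx * X' + fxx * X' ^ 2 + fx * X'' - Y' * gdd)) :
    |Y'| ≤ α ∧ |Y''| ≤ α := by
  have hgdpos : (0:ℝ) < |gd| := lt_of_lt_of_le (by norm_num) hgd
  have hfxX' : |fx * X'| ≤ (4 + α) * α := by
    rw [abs_mul]
    exact mul_le_mul hfx hX' (abs_nonneg _) (by positivity)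
  have hnum1 : |fθ + fx * X'| ≤ 13 * α := by
    have h := abs_add_le fθ (fx * X')
    have h5 : (4 + α) * α ≤ 5 * α := by nlinarith
    linarith
  have hY'b : |Y'| ≤ α := by
    rw [hY', abs_div, div_le_iff₀ hgdpos]
    have h15 : 13 * α ≤ α * |gd| := by nlinarith
    linarith
  refine ⟨hY'b, ?_⟩
  have hfxxX : |fxx * X' ^ 2| ≤ 2 * α := by
    have h2 : |X' ^ 2| ≤ α ^ 2 := by
      rw [abs_pow]
      exact pow_le_pow_left₀ (abs_nonneg _) hX' 2
    have h1 : |fxx * X' ^ 2| ≤ (2 * α⁻¹) * α ^ 2 := by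
      rw [abs_mul]
      exact mul_le_mul hfxx h2 (abs_nonneg _) (by positivity)
    have h3 : (2 * α⁻¹) * α ^ 2 = 2 * α := by field_simp
    linarith
  have hfθxX : |2 * fθx * X'| ≤ 2 * α * α := by
    rw [abs_mul, abs_mul, abs_two]
    have : |fθx| * |X'| ≤ α * α :=
      mul_le_mul hfθx hX' (abs_nonneg _) (by positivity)
    nlinarith [abs_nonneg fθx, abs_nonneg X']
  have hfxX'' : |fx * X''| ≤ (4 + α) * α := by
    rw [abs_mul]
    exact mul_le_mul hfx hX'' (abs_nonneg _) (by positivity)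
  have hYg : |Y' * gdd| ≤ α * α := by
    rw [abs_mul]
    exact mul_le_mul hY'b hgdd (abs_nonneg _) (by positivity)
  have hN : |fθθ + 2 * fθx * X' + fxx * X' ^ 2 + fx * X'' - Y' * gdd| ≤ 60 * α := by
    have t1 := abs_add_le fθθ (2 * fθx * X')
    have t2 := abs_add_le (fθθ + 2 * fθx * X') (fxx * X' ^ 2)
    have t3 := abs_add_le (fθθ + 2 * fθx * X' + fxx * X' ^ 2) (fx * X'')
    have t4 := abs_sub (fθθ + 2 * fθx * X' + fxx * X' ^ 2 + fx * X'') (Y' * gdd)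
    have h1 : 2 * α * α ≤ α := by nlinarith
    have h2 : (4 + α) * α ≤ 5 * α := by nlinarith
    have h3 : α * α ≤ α := by nlinarith
    linarith
  have hinv : |1 / gd| ≤ 1 / 15 := by
    rw [abs_div, abs_one]
    exact div_le_div_of_nonneg_left (by norm_num) (by norm_num) hgd
  have hfinal : |Y''| ≤ (1 / 15) ^ 2 * (60 * α) := by
    rw [hY'', abs_mul, abs_pow]
    exact mul_le_mul (pow_le_pow_left₀ (abs_nonneg _) hinv 2) hN (abs_nonneg _)
      (by positivity)
  have : (1 / 15 : ℝ) ^ 2 * (60 * α) ≤ α := by nlinarith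
  linarith
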